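/- Let T : M → N be an additive functor between additive categories with M pseudo-abelian (idempotent complete). Then the full subcategory N_T of objects at which the left adjoint of T is defined is stable under direct summands: if N ∈ N_T and P is a direct summand of N in N, then P ∈ N_T. -/

import Mathlib

open CategoryTheory CategoryTheory.Limits Opposite

/-- The left adjoint of `T` is defined at `X`: the functor `A ↦ (X ⟶ T A)` is
corepresentable. -/
def LeftAdjointDefinedAt {M : Type*} [Category M] {N : Type*} [Category N]
    (T : M ⥤ N) (X : N) : Prop :=
  ∃ P : M, Nonempty ((T ⋙ coyoneda.obj (op X)) ≅ coyoneda.obj (op P))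

/-- Let `T : M ⥤ N` be an additive functor between additive categories with
`M` pseudo-abelian (idempotent complete).  Then the full subcategory `N_T` of objects at which
the left adjoint of `T` is defined is stable under direct summands: if the left adjoint is
defined at `X` and `P` is a direct summand of `X` in `N`, then it is defined at `P`. -/
theorem stmt5 {M : Type*} [Category M] {N : Type*} [Category N]
    [Preadditive M] [Preadditive N] [IsIdempotentComplete M]
    (T : M ⥤ N) [T.Additive]
    (X P : N) (i : P ⟶ X) (r : X ⟶ P) (hir : i ≫ r = 𝟙 P)
    (hX : LeftAdjointDefinedAt T X) :
    LeftAdjointDefinedAt T P := by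
  obtain ⟨Q, ⟨Φ⟩⟩ := hX
  set e : X ⟶ X := r ≫ i with he
  have he2 : e ≫ e = e := by
    rw [he, Category.assoc, reassoc_of% hir]
  set f : Q ⟶ Q := Φ.hom.app Q (e ≫ Φ.inv.app Q (𝟙 Q)) with hf
  have key : ∀ (A : M) (u : Q ⟶ A), Φ.hom.app A (e ≫ Φ.inv.app A u) = f ≫ u := by
    intro A u
    have h1 : Φ.inv.app A u = Φ.inv.app Q (𝟙 Q) ≫ T.map u := by
      have := ConcreteCategory.congr_hom (Φ.inv.naturality u) (𝟙 Q)
      simpa using this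
    have h2 : Φ.hom.app A (e ≫ Φ.inv.app Q (𝟙 Q) ≫ T.map u)
        = Φ.hom.app Q (e ≫ Φ.inv.app Q (𝟙 Q)) ≫ u := by
      have := ConcreteCategory.congr_hom (Φ.hom.naturality u) (e ≫ Φ.inv.app Q (𝟙 Q) : X ⟶ T.obj Q)
      simpa using this
    rw [h1, hf]
    exact h2
  have invhom : ∀ (A : M) (v : X ⟶ T.obj A), Φ.inv.app A (Φ.hom.app A v) = v := by
    intro A v
    have := ConcreteCategory.congr_hom (Φ.hom_inv_id_app A) v
    simpa using this
  have hominv : ∀ (A : M) (u : Q ⟶ A), Φ.hom.app A (Φ.inv.app A u) = u := by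
    intro A u
    have := ConcreteCategory.congr_hom (Φ.inv_hom_id_app A) u
    simpa using this
  have key' : ∀ (A : M) (u : Q ⟶ A), Φ.inv.app A (f ≫ u) = e ≫ Φ.inv.app A u := by
    intro A u
    rw [← key A u, invhom]
  have hf2 : f ≫ f = f := by
    rw [← key Q f]
    have hv : Φ.inv.app Q f = e ≫ Φ.inv.app Q (𝟙 Q) := by
      rw [← Category.comp_id f, key']
    rw [hv, ← Category.assoc, he2, ← hf]
  obtain ⟨S, i', e', h1, h2⟩ := IsIdempotentComplete.idempotents_split Q f hf2
  refine ⟨S, ⟨NatIso.ofComponents (fun A => Equiv.toIso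
    { toFun := fun g => i' ≫ Φ.hom.app A (r ≫ g)
      invFun := fun h => i ≫ Φ.inv.app A (e' ≫ h)
      left_inv := by
        intro g
        dsimp only
        have : e' ≫ i' ≫ Φ.hom.app A (r ≫ g) = f ≫ Φ.hom.app A (r ≫ g) := by
          rw [← Category.assoc, h2]
        rw [this, key', invhom, he]
        simp only [← Category.assoc, hir, Category.id_comp]
      right_inv := by
        intro h
        dsimp only
        have : r ≫ i ≫ Φ.inv.app A (e' ≫ h) = e ≫ Φ.inv.app A (e' ≫ h) := by
          rw [← Category.assoc, ← he]
        have hif : i' ≫ f = i' := by rw [← h2, ← Category.assoc, h1, Category.id_comp]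
        rw [this, key, ← Category.assoc, hif, ← Category.assoc, h1, Category.id_comp] })
    (fun {A B} u => ?_)⟩⟩
  refine ConcreteCategory.hom_ext _ _ (fun g => ?_)
  have h2 : Φ.hom.app B (r ≫ g ≫ T.map u) = Φ.hom.app A (r ≫ g) ≫ u := by
    have := ConcreteCategory.congr_hom (Φ.hom.naturality u) (r ≫ g : X ⟶ T.obj A)
    simpa using this
  show i' ≫ Φ.hom.app B (r ≫ g ≫ T.map u) = (i' ≫ Φ.hom.app A (r ≫ g)) ≫ u
  rw [h2, Category.assoc]
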